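/- Let ξ₁ ∈ S₁ and ξ₂ ∈ S₃ be complex numbers, and let t ∈ [−1,1] be real. Then there exists k ∈ {−1, 0, 1} such that | |ξ₁−i|² + |ξ₂−1|² + i(t + 2k − 2·Re ξ₁ + 2·Im ξ₂) | ≤ 2. Hence the region Σ₃ is covered by the closed regions bounded by the Heisenberg sphere of radius √2 centered at ((i,1)ᵀ,0) together with its vertical translates by ±2. -/

import Mathlib

open Complex

/-- The closed triangle with vertices `i, i/2, (1+i)/2`. -/
def triS₁ : Set ℂ := {z : ℂ | 0 ≤ z.re ∧ 1/2 ≤ z.im ∧ z.re + z.im ≤ 1}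

/-- The closed triangle with vertices `0, 1, (1+i)/2`. -/
def triS₃ : Set ℂ := {z : ℂ | 0 ≤ z.im ∧ z.im ≤ z.re ∧ z.re + z.im ≤ 1}

lemma aux_abs_bound (a₁ a₂ b : ℝ) (h1 : 0 ≤ a₁) (h2 : 0 ≤ a₂)
    (h1' : a₁ ≤ 1/2) (h2' : a₂ ≤ 1) (hb : b ^ 2 ≤ 1) :
    ‖(a₁ : ℂ) + (a₂ : ℂ) + Complex.I * (b : ℂ)‖ ≤ 2 := by
  rw [Complex.norm_def]
  have hre : ((a₁ : ℂ) + (a₂ : ℂ) + Complex.I * (b : ℂ)).re = a₁ + a₂ := by simp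
  have him : ((a₁ : ℂ) + (a₂ : ℂ) + Complex.I * (b : ℂ)).im = b := by simp
  rw [Complex.normSq_apply, hre, him]
  have h4 : (a₁ + a₂) * (a₁ + a₂) + b * b ≤ 4 := by nlinarith
  calc Real.sqrt ((a₁ + a₂) * (a₁ + a₂) + b * b) ≤ Real.sqrt 4 := Real.sqrt_le_sqrt h4
    _ = 2 := by rw [show (4:ℝ) = 2^2 by norm_num, Real.sqrt_sq (by norm_num)]

/-- The region `Σ₃` is covered by the closed regions bounded by the Heisenberg
sphere of radius `√2` centered at `((i,1)ᵀ,0)` together with its vertical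
translates by `±2`. -/
theorem sigma_three_covered
    (ξ₁ ξ₂ : ℂ) (hξ₁ : ξ₁ ∈ triS₁) (hξ₂ : ξ₂ ∈ triS₃)
    (t : ℝ) (ht : -1 ≤ t ∧ t ≤ 1) :
    ∃ k : ℤ, (k = -1 ∨ k = 0 ∨ k = 1) ∧
      ‖(‖ξ₁ - Complex.I‖ : ℂ) ^ 2 +
        (‖ξ₂ - 1‖ : ℂ) ^ 2 +
        Complex.I * ((t + 2 * k - 2 * ξ₁.re + 2 * ξ₂.im : ℝ) : ℂ)‖ ≤ 2 := by
  obtain ⟨hx, hy, hxy⟩ := hξ₁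
  obtain ⟨hv, hvu, huv⟩ := hξ₂
  obtain ⟨ht1, ht2⟩ := ht
  set x := ξ₁.re with hxd
  set y := ξ₁.im with hyd
  set u := ξ₂.re with hud
  set v := ξ₂.im with hvd
  have ha₁ : ‖ξ₁ - Complex.I‖ ^ 2 = x ^ 2 + (y - 1) ^ 2 := by
    rw [← Complex.normSq_eq_norm_sq, Complex.normSq_apply]
    simp [Complex.sub_re, Complex.sub_im]
    ring
  have ha₂ : ‖ξ₂ - 1‖ ^ 2 = (u - 1) ^ 2 + v ^ 2 := by
    rw [← Complex.normSq_eq_norm_sq, Complex.normSq_apply]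
    simp [Complex.sub_re, Complex.sub_im]
    ring
  have h1 : x ^ 2 + (y - 1) ^ 2 ≤ 1/2 := by nlinarith
  have h2 : (u - 1) ^ 2 + v ^ 2 ≤ 1 := by nlinarith
  have h1n : 0 ≤ x ^ 2 + (y - 1) ^ 2 := by positivity
  have h2n : 0 ≤ (u - 1) ^ 2 + v ^ 2 := by positivity
  have key : ∀ k : ℤ, (t + 2 * k - 2 * x + 2 * v) ^ 2 ≤ 1 →
      ‖(‖ξ₁ - Complex.I‖ : ℂ) ^ 2 +
        (‖ξ₂ - 1‖ : ℂ) ^ 2 +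
        Complex.I * ((t + 2 * k - 2 * x + 2 * v : ℝ) : ℂ)‖ ≤ 2 := by
    intro k hk
    have e1 : ((‖ξ₁ - Complex.I‖ : ℝ) : ℂ) ^ 2
        = ((x ^ 2 + (y - 1) ^ 2 : ℝ) : ℂ) := by
      rw [← ha₁]; push_cast; ring
    have e2 : ((‖ξ₂ - 1‖ : ℝ) : ℂ) ^ 2
        = (((u - 1) ^ 2 + v ^ 2 : ℝ) : ℂ) := by
      rw [← ha₂]; push_cast; ring
    rw [e1, e2]
    exact aux_abs_bound _ _ _ h1n h2n h1 h2 hk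
  have hbl : -2 ≤ t - 2 * x + 2 * v := by nlinarith
  have hbu : t - 2 * x + 2 * v ≤ 2 := by nlinarith
  rcases le_or_gt (t - 2 * x + 2 * v) (-1) with hc | hc
  · refine ⟨1, Or.inr (Or.inr rfl), key 1 ?_⟩
    have : (t + 2 * ((1:ℤ):ℝ) - 2 * x + 2 * v) = (t - 2 * x + 2 * v) + 2 := by
      push_cast; ring
    rw [this]; clear key ha₁ ha₂ this; nlinarith
  · rcases le_or_gt (t - 2 * x + 2 * v) 1 with hc2 | hc2
    · refine ⟨0, Or.inr (Or.inl rfl), key 0 ?_⟩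
      have : (t + 2 * ((0:ℤ):ℝ) - 2 * x + 2 * v) = (t - 2 * x + 2 * v) := by
        push_cast; ring
      rw [this]; clear key ha₁ ha₂ this; nlinarith
    · refine ⟨-1, Or.inl rfl, key (-1) ?_⟩
      have : (t + 2 * ((-1:ℤ):ℝ) - 2 * x + 2 * v) = (t - 2 * x + 2 * v) - 2 := by
        push_cast; ring
      rw [this]; clear key ha₁ ha₂ this; nlinarith
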